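/- Let G be a K₆-free graph on n vertices with e edges. Then τ_B(G) ≤ 6n²/25 − e/5. -/

import Mathlib

open SimpleGraph Finset

variable {V : Type*} [Fintype V] [DecidableEq V]

/-- `A` is a triangle-independent edge set of `G`: a set of edges of `G`
containing at most one edge from each triangle of `G`. -/
def IsTriangleIndep (G : SimpleGraph V) (A : Finset (Sym2 V)) : Prop :=
  (A : Set (Sym2 V)) ⊆ G.edgeSet ∧
    ∀ a b c : V, G.Adj a b → G.Adj b c → G.Adj a c →
      ({s(a, b), s(b, c), s(a, c)} ∩ A).card ≤ 1

/-- `α₁(G)`: the maximum size of a triangle-independent set in `G`. -/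
noncomputable def alphaOne (G : SimpleGraph V) : ℕ :=
  sSup {k | ∃ A : Finset (Sym2 V), IsTriangleIndep G A ∧ A.card = k}

/-- `τ_B(G)`: the minimum size of an edge set of `G` whose deletion makes `G` bipartite. -/
noncomputable def tauB (G : SimpleGraph V) : ℕ :=
  sInf {k | ∃ D : Finset (Sym2 V), (D : Set (Sym2 V)) ⊆ G.edgeSet ∧
    (G.deleteEdges (D : Set (Sym2 V))).Colorable 2 ∧ D.card = k}

/-- `b(G)`: the maximum size of a vertex set inducing a bipartite subgraph of `G`. -/
noncomputable def bipNum (G : SimpleGraph V) : ℕ :=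
  sSup {k | ∃ B : Finset V, (G.induce (B : Set V)).Colorable 2 ∧ B.card = k}

set_option linter.unusedSectionVars false
set_option maxHeartbeats 1000000

def pc (G : SimpleGraph V) [DecidableRel G.Adj] (S T : Finset V) : ℕ :=
  ((S ×ˢ T).filter fun p => G.Adj p.1 p.2).card

lemma pc_eq_sum (G : SimpleGraph V) [DecidableRel G.Adj] (S T : Finset V) :
    pc G S T = ∑ u ∈ S, (T.filter fun w => G.Adj u w).card := by
  simp only [pc, Finset.card_filter, Finset.sum_product]

lemma pc_comm (G : SimpleGraph V) [DecidableRel G.Adj] (S T : Finset V) :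
    pc G S T = pc G T S := by
  apply Finset.card_nbij' (fun p => (p.2, p.1)) (fun p => (p.2, p.1)) <;>
    simp +contextual [Set.MapsTo, Set.LeftInvOn, Set.RightInvOn, G.adj_comm, and_comm]

lemma pc_union_right (G : SimpleGraph V) [DecidableRel G.Adj] (S : Finset V) {T₁ T₂ : Finset V}
    (h : Disjoint T₁ T₂) : pc G S (T₁ ∪ T₂) = pc G S T₁ + pc G S T₂ := by
  rw [pc_eq_sum, pc_eq_sum, pc_eq_sum, ← Finset.sum_add_distrib]
  refine Finset.sum_congr rfl fun u _ => ?_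
  rw [Finset.filter_union, Finset.card_union_of_disjoint]
  exact Finset.disjoint_filter_filter h

lemma pc_union_left (G : SimpleGraph V) [DecidableRel G.Adj] (T : Finset V) {S₁ S₂ : Finset V}
    (h : Disjoint S₁ S₂) : pc G (S₁ ∪ S₂) T = pc G S₁ T + pc G S₂ T := by
  rw [pc_comm, pc_union_right G T h, pc_comm G T S₁, pc_comm G T S₂]

lemma pc_split (G : SimpleGraph V) [DecidableRel G.Adj] {A B : Finset V} (hBA : B ⊆ A) :
    pc G A A + pc G (A \ B) (A \ B)
      = pc G B B + 2 * ∑ u ∈ A \ B, (A.filter fun w => G.Adj u w).card := by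
  have hd : Disjoint B (A \ B) := Finset.disjoint_sdiff
  have hA : A = B ∪ (A \ B) := by rw [Finset.union_sdiff_of_subset hBA]
  have h1 : pc G A A = pc G B B + pc G B (A \ B) + (pc G (A \ B) B + pc G (A \ B) (A \ B)) := by
    conv_lhs => rw [hA, pc_union_left G _ hd, pc_union_right G _ hd, pc_union_right G _ hd]
  have h2 : ∑ u ∈ A \ B, (A.filter fun w => G.Adj u w).card
      = pc G (A \ B) B + pc G (A \ B) (A \ B) := by
    rw [← pc_union_right G _ hd, ← hA, pc_eq_sum]
  have h3 : pc G B (A \ B) = pc G (A \ B) B := pc_comm G _ _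
  omega

lemma step_ineq {k m d : ℝ} (hk : 1 ≤ k) :
    (1 - 1/k) * d^2 + 2*(m - d)*d ≤ (1 - 1/(k+1)) * m^2 := by
  have hk0 : (0:ℝ) < k := by linarith
  have hk1 : (0:ℝ) < k + 1 := by linarith
  have e1 : (1 - 1/k) = (k-1)/k := by field_simp
  have e2 : (1 - 1/(k+1)) = k/(k+1) := by field_simp; ring
  rw [e1, e2, div_mul_eq_mul_div, div_mul_eq_mul_div, div_add' _ _ _ hk0.ne',
    div_le_div_iff₀ (by positivity) hk1]
  nlinarith [sq_nonneg (k*m - (k+1)*d), mul_pos hk0 hk1]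

/-- Füredi-type stability: a `K_{r+1}`-free graph (within `A`) admits an `r`-partition
whose number of (ordered) monochromatic adjacent pairs is at most `(1-1/r)|A|² - pc A A`. -/
lemma furedi (G : SimpleGraph V) [DecidableRel G.Adj] :
    ∀ r : ℕ, 1 ≤ r → ∀ A : Finset V,
      (∀ t : Finset V, t ⊆ A → ¬ G.IsNClique (r+1) t) →
      ∃ c : V → Fin r,
        (((A ×ˢ A).filter fun p => G.Adj p.1 p.2 ∧ c p.1 = c p.2).card : ℝ) ≤
          (1 - 1/(r:ℝ)) * (A.card : ℝ)^2 - (pc G A A : ℝ) := by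
  intro r
  induction r with
  | zero => omega
  | succ k IH =>
    intro _ A hA
    rcases Nat.eq_zero_or_pos k with hk0 | hk1
    · -- base case: one part, no edges inside A
      subst hk0
      refine ⟨fun _ => 0, ?_⟩
      have hpc : pc G A A = 0 := by
        rw [pc, Finset.card_eq_zero, Finset.filter_eq_empty_iff]
        rintro ⟨x, y⟩ hxy hadj
        simp only [Finset.mem_product] at hxy
        refine hA {x, y} ?_ ?_
        · exact Finset.insert_subset hxy.1 (Finset.singleton_subset_iff.2 hxy.2)
        · constructor
          · have h2 : G.IsClique ({x, y} : Set V) := isClique_pair.2 fun _ => hadj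
            simpa using h2
          · rw [Finset.card_insert_of_notMem (by simp [hadj.ne]), Finset.card_singleton]
      have hmono : ((A ×ˢ A).filter fun p => G.Adj p.1 p.2 ∧ (0:Fin 1) = 0).card = 0 := by
        rw [Finset.card_eq_zero, Finset.filter_eq_empty_iff]
        rintro ⟨x, y⟩ hxy ⟨hadj, -⟩
        have : ((A ×ˢ A).filter fun p => G.Adj p.1 p.2) = ∅ := by
          rw [← Finset.card_eq_zero]; exact hpc
        have := Finset.filter_eq_empty_iff.1 this hxy
        exact this hadj
      rw [hmono, hpc]
      norm_num
    · -- inductive step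
      rcases A.eq_empty_or_nonempty with rfl | hAne
      · exact ⟨fun _ => ⟨0, Nat.succ_pos k⟩, by simp [pc]⟩
      obtain ⟨v, hv, hmax⟩ := A.exists_max_image (fun u => (A.filter fun w => G.Adj u w).card) hAne
      set B := A.filter (fun w => G.Adj v w) with hBdef
      have hBA : B ⊆ A := Finset.filter_subset _ _
      have hclB : ∀ t : Finset V, t ⊆ B → ¬ G.IsNClique (k+1) t := by
        intro t ht hcl
        refine hA (insert v t) (Finset.insert_subset hv (ht.trans hBA)) ?_
        exact hcl.insert fun b hb => (Finset.mem_filter.1 (ht hb)).2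
      obtain ⟨c', hc'⟩ := IH hk1 B hclB
      classical
      refine ⟨fun x => if x ∈ B then (c' x).castSucc else Fin.last k, ?_⟩
      set c : V → Fin (k+1) := fun x => if x ∈ B then (c' x).castSucc else Fin.last k with hcdef
      -- monochromatic pairs in A are inside B (mono for c') or inside C := A \ B
      have hsub : ((A ×ˢ A).filter fun p => G.Adj p.1 p.2 ∧ c p.1 = c p.2) ⊆
          ((B ×ˢ B).filter fun p => G.Adj p.1 p.2 ∧ c' p.1 = c' p.2) ∪
          (((A \ B) ×ˢ (A \ B)).filter fun p => G.Adj p.1 p.2) := by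
        rintro ⟨x, y⟩ hp
        simp only [Finset.mem_filter, Finset.mem_product] at hp
        obtain ⟨⟨hxA, hyA⟩, hadj, hcc⟩ := hp
        by_cases hxB : x ∈ B <;> by_cases hyB : y ∈ B
        · refine Finset.mem_union_left _ ?_
          simp only [Finset.mem_filter, Finset.mem_product]
          refine ⟨⟨hxB, hyB⟩, hadj, ?_⟩
          have : (c' x).castSucc = (c' y).castSucc := by
            simpa [hcdef, hxB, hyB] using hcc
          exact Fin.castSucc_injective _ this
        · exfalso
          have : (c' x).castSucc = Fin.last k := by simpa [hcdef, hxB, hyB] using hcc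
          exact (Fin.castSucc_lt_last (c' x)).ne this
        · exfalso
          have : Fin.last k = (c' y).castSucc := by simpa [hcdef, hxB, hyB] using hcc
          exact (Fin.castSucc_lt_last (c' y)).ne this.symm
        · refine Finset.mem_union_right _ ?_
          simp only [Finset.mem_filter, Finset.mem_product, Finset.mem_sdiff]
          exact ⟨⟨⟨hxA, hxB⟩, ⟨hyA, hyB⟩⟩, hadj⟩
      have hcard : ((A ×ˢ A).filter fun p => G.Adj p.1 p.2 ∧ c p.1 = c p.2).card ≤
          ((B ×ˢ B).filter fun p => G.Adj p.1 p.2 ∧ c' p.1 = c' p.2).card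
          + pc G (A \ B) (A \ B) :=
        (Finset.card_le_card hsub).trans (Finset.card_union_le _ _)
      -- degree sum bound
      have hdegsum : ∑ u ∈ A \ B, (A.filter fun w => G.Adj u w).card ≤ (A \ B).card * B.card := by
        have : ∀ u ∈ A \ B, (A.filter fun w => G.Adj u w).card ≤ B.card := by
          intro u hu
          exact (hmax u (Finset.mem_sdiff.1 hu).1).trans_eq rfl
        simpa [smul_eq_mul] using Finset.sum_le_card_nsmul _ _ _ this
      have hsplit := pc_split G hBA
      -- cast everything to ℝ
      have hdm : B.card ≤ A.card := Finset.card_le_card hBA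
      have hCcard : (A \ B).card = A.card - B.card := Finset.card_sdiff_of_subset hBA
      have hCr : ((A \ B).card : ℝ) = (A.card : ℝ) - (B.card : ℝ) := by
        rw [hCcard, Nat.cast_sub hdm]
      have hk1r : (1:ℝ) ≤ (k:ℝ) := by exact_mod_cast hk1
      have hcast : (((A ×ˢ A).filter fun p => G.Adj p.1 p.2 ∧ c p.1 = c p.2).card : ℝ) ≤
          (((B ×ˢ B).filter fun p => G.Adj p.1 p.2 ∧ c' p.1 = c' p.2).card : ℝ)
          + (pc G (A \ B) (A \ B) : ℝ) := by exact_mod_cast hcard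
      have hsplitr : (pc G A A : ℝ) + (pc G (A \ B) (A \ B) : ℝ)
          = (pc G B B : ℝ) + 2 * (∑ u ∈ A \ B, (A.filter fun w => G.Adj u w).card : ℕ) := by
        exact_mod_cast hsplit
      have hdegsumr : ((∑ u ∈ A \ B, (A.filter fun w => G.Adj u w).card : ℕ) : ℝ)
          ≤ ((A.card : ℝ) - (B.card : ℝ)) * (B.card : ℝ) := by
        rw [← hCr]; exact_mod_cast hdegsum
      have hstep := step_ineq (k := (k:ℝ)) (m := (A.card : ℝ)) (d := (B.card : ℝ)) hk1r
      have hcast5 : ((k:ℝ) + 1) = ((k+1 : ℕ) : ℝ) := by push_cast; ring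
      rw [← hcast5] at *
      calc (((A ×ˢ A).filter fun p => G.Adj p.1 p.2 ∧ c p.1 = c p.2).card : ℝ)
          ≤ ((1 - 1/(k:ℝ)) * ((B.card : ℝ))^2 - (pc G B B : ℝ)) + (pc G (A \ B) (A \ B) : ℝ) := by
            refine hcast.trans ?_
            have := hc'
            linarith [hc']
        _ ≤ (1 - 1/((k:ℝ)+1)) * ((A.card : ℝ))^2 - (pc G A A : ℝ) := by linarith

lemma pc_univ (G : SimpleGraph V) [DecidableRel G.Adj] :
    pc G univ univ = 2 * G.edgeFinset.card := by
  rw [pc_eq_sum, ← SimpleGraph.sum_degrees_eq_twice_card_edges]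
  refine Finset.sum_congr rfl fun u _ => ?_
  unfold SimpleGraph.degree
  congr 1
  ext w
  simp [SimpleGraph.mem_neighborFinset]

lemma mono_bridge (G : SimpleGraph V) [DecidableRel G.Adj] (P : Sym2 V → Prop) [DecidablePred P] :
    (((univ ×ˢ univ : Finset (V × V))).filter fun p => G.Adj p.1 p.2 ∧ P s(p.1, p.2)).card
      = 2 * (G.edgeFinset.filter P).card := by
  let G' : SimpleGraph V :=
    { Adj := fun a b => G.Adj a b ∧ P s(a, b)
      symm := by
        constructor
        rintro a b ⟨h1, h2⟩
        exact ⟨h1.symm, by rwa [Sym2.eq_swap]⟩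
      loopless := ⟨fun a h => G.irrefl h.1⟩ }
  letI : DecidableRel G'.Adj := fun a b => inferInstanceAs (Decidable (G.Adj a b ∧ P s(a, b)))
  have h1 : (((univ ×ˢ univ : Finset (V × V))).filter fun p => G.Adj p.1 p.2 ∧ P s(p.1, p.2)).card
      = pc G' univ univ := rfl
  have h2 : G'.edgeFinset = G.edgeFinset.filter P := by
    ext ed
    induction ed with
    | _ a b =>
      simp [SimpleGraph.mem_edgeFinset, SimpleGraph.mem_edgeSet, G']
  rw [pc_univ, h2] at h1
  exact h1

lemma count_pairs_fin5 : ∀ i j : Fin 5, i ≠ j →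
    (((univ : Finset (Fin 5)).powersetCard 2).filter
      (fun S => decide (i ∈ S) = decide (j ∈ S))).card = 4 := by decide

lemma per_edge_bound (c : V → Fin 5) (ed : Sym2 V) :
    (((univ : Finset (Fin 5)).powersetCard 2).filter
        (fun S => (Sym2.map (fun v => decide (c v ∈ S)) ed).IsDiag)).card
      ≤ 4 + 6 * (if (Sym2.map c ed).IsDiag then 1 else 0) := by
  induction ed with
  | _ a b =>
    by_cases h : c a = c b
    · have h2 : (Sym2.map c s(a, b)).IsDiag := by
        rw [Sym2.map_pair_eq, Sym2.mk_isDiag_iff]; exact h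
      rw [if_pos h2]
      calc (((univ : Finset (Fin 5)).powersetCard 2).filter _).card
          ≤ ((univ : Finset (Fin 5)).powersetCard 2).card := Finset.card_filter_le _ _
        _ ≤ 10 := by decide
        _ ≤ 4 + 6 * 1 := by norm_num
    · have h2 : ¬ (Sym2.map c s(a, b)).IsDiag := by
        rw [Sym2.map_pair_eq, Sym2.mk_isDiag_iff]; exact h
      rw [if_neg h2]
      have key := count_pairs_fin5 (c a) (c b) h
      have : (((univ : Finset (Fin 5)).powersetCard 2).filter
          (fun S => (Sym2.map (fun v => decide (c v ∈ S)) s(a, b)).IsDiag))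
          = (((univ : Finset (Fin 5)).powersetCard 2).filter
          (fun S => decide (c a ∈ S) = decide (c b ∈ S))) := by
        apply Finset.filter_congr
        intro S _
        rw [Sym2.map_pair_eq]
        exact Sym2.mk_isDiag_iff
      rw [this, key]


/-- For every `K₆`-free graph `G` on `n` vertices with `e` edges, `τ_B(G) ≤ 6n²/25 - e/5`. -/
theorem tauB_le_of_cliqueFree_six (G : SimpleGraph V) [DecidableRel G.Adj]
    (h6 : G.CliqueFree 6) :
    (tauB G : ℝ) ≤ 6 * (Fintype.card V : ℝ) ^ 2 / 25 - (G.edgeFinset.card : ℝ) / 5 := by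
  classical
  obtain ⟨c, hc⟩ := furedi G 5 (by norm_num) univ (fun t _ => h6 t)
  set mono := (G.edgeFinset.filter fun ed => (Sym2.map c ed).IsDiag).card with hmono
  have hbridge : (((univ ×ˢ univ : Finset (V × V))).filter
      fun p => G.Adj p.1 p.2 ∧ c p.1 = c p.2).card = 2 * mono := by
    rw [hmono, ← mono_bridge G (fun ed => (Sym2.map c ed).IsDiag)]
    refine congrArg Finset.card (Finset.filter_congr ?_)
    rintro ⟨a, b⟩ _
    rw [Sym2.map_pair_eq]
    exact Iff.and Iff.rfl Sym2.mk_isDiag_iff.symm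
  have hpcu : (pc G univ univ : ℝ) = 2 * (G.edgeFinset.card : ℝ) := by
    exact_mod_cast pc_univ G
  have hb : ((((univ ×ˢ univ : Finset (V × V))).filter
      fun p => G.Adj p.1 p.2 ∧ c p.1 = c p.2).card : ℝ) = 2 * (mono : ℝ) := by
    exact_mod_cast hbridge
  rw [hb, hpcu, Finset.card_univ] at hc
  have hmonobound : 2 * (mono : ℝ) ≤ (4/5) * (Fintype.card V : ℝ)^2
      - 2 * (G.edgeFinset.card : ℝ) := by
    have h5 : (1 - 1/((5:ℕ):ℝ)) = (4/5 : ℝ) := by norm_num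
    rw [h5] at hc
    linarith
  set DS : Finset (Fin 5) → Finset (Sym2 V) := fun S =>
    G.edgeFinset.filter (fun ed => (Sym2.map (fun v => decide (c v ∈ S)) ed).IsDiag) with hDS
  set P2 := (univ : Finset (Fin 5)).powersetCard 2 with hP2
  have hsum : ∑ S ∈ P2, (DS S).card ≤ 4 * G.edgeFinset.card + 6 * mono := by
    have h1 : ∑ S ∈ P2, (DS S).card = ∑ ed ∈ G.edgeFinset,
        (P2.filter fun S => (Sym2.map (fun v => decide (c v ∈ S)) ed).IsDiag).card := by
      simp only [hDS, Finset.card_filter]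
      rw [Finset.sum_comm]
    rw [h1]
    calc ∑ ed ∈ G.edgeFinset,
          (P2.filter fun S => (Sym2.map (fun v => decide (c v ∈ S)) ed).IsDiag).card
        ≤ ∑ ed ∈ G.edgeFinset, (4 + 6 * (if (Sym2.map c ed).IsDiag then 1 else 0)) :=
          Finset.sum_le_sum (fun ed _ => per_edge_bound c ed)
      _ = 4 * G.edgeFinset.card + 6 * mono := by
          rw [Finset.sum_add_distrib, Finset.sum_const, ← Finset.mul_sum, ← Finset.card_filter]
          rw [smul_eq_mul, mul_comm (G.edgeFinset.card) 4, hmono]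
  have hP2ne : P2.Nonempty := by rw [hP2]; decide
  obtain ⟨S₀, hS₀, hmin⟩ := P2.exists_min_image (fun S => (DS S).card) hP2ne
  have hcardP2 : P2.card = 10 := by rw [hP2]; decide
  have h10 : 10 * (DS S₀).card ≤ 4 * G.edgeFinset.card + 6 * mono := by
    calc 10 * (DS S₀).card = P2.card • (DS S₀).card := by rw [hcardP2, smul_eq_mul]
      _ ≤ ∑ S ∈ P2, (DS S).card := Finset.card_nsmul_le_sum _ _ _ (fun S hS => hmin S hS)
      _ ≤ _ := hsum
  have htau : tauB G ≤ (DS S₀).card := by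
    apply Nat.sInf_le
    refine ⟨DS S₀, ?_, ?_, rfl⟩
    · intro ed hed
      rw [Finset.mem_coe, hDS, Finset.mem_filter] at hed
      exact (SimpleGraph.mem_edgeFinset).1 hed.1
    · have hcol : (G.deleteEdges ((DS S₀ : Finset (Sym2 V)) : Set (Sym2 V))).Coloring Bool := by
        refine SimpleGraph.Coloring.mk (fun v => decide (c v ∈ S₀)) ?_
        intro a b hadj heq
        rw [SimpleGraph.deleteEdges_adj] at hadj
        apply hadj.2
        rw [Finset.mem_coe, hDS, Finset.mem_filter]
        refine ⟨SimpleGraph.mem_edgeFinset.2 ((G.mem_edgeSet).2 hadj.1), ?_⟩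
        rw [Sym2.map_pair_eq, Sym2.mk_isDiag_iff]
        exact heq
      have h2col := hcol.colorable
      rwa [Fintype.card_bool] at h2col
  have htauR : (tauB G : ℝ) ≤ ((DS S₀).card : ℝ) := Nat.cast_le.2 htau
  have h10R : 10 * (((DS S₀).card : ℕ) : ℝ)
      ≤ 4 * (G.edgeFinset.card : ℝ) + 6 * (mono : ℝ) := by exact_mod_cast h10
  linarith
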